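/- arXiv:2210.13922 — 2 statements merged into one kernel-verified Lean document; each statement's English description precedes it below -/
import Mathlib

section
/- Fix 0 < p < ∞. Every extremal function φ for exponent p is real-valued on ℝ, i.e. φ(x) ∈ ℝ for every real x. -/
open MeasureTheory Real

noncomputable section

/-- `f` is an entire function of exponential type at most `π`. -/
def ExpTypePi (f : ℂ → ℂ) : Prop :=
  ∀ ε : ℝ, 0 < ε → ∃ C : ℝ, 0 < C ∧
    ∀ z : ℂ, ‖f z‖ ≤ C * Real.exp ((Real.pi + ε) * ‖z‖)

/-- Membership in the Paley–Wiener space `PW^p`. -/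
def MemPW (p : ℝ) (f : ℂ → ℂ) : Prop :=
  Differentiable ℂ f ∧ ExpTypePi f ∧
    Integrable (fun x : ℝ => ‖f x‖ ^ p)

/-- `‖f‖_p^p`, the `p`-th power of the `L^p(ℝ)` norm of `f` restricted to `ℝ`. -/
def PWnorm (p : ℝ) (f : ℂ → ℂ) : ℝ := ∫ x : ℝ, ‖f x‖ ^ p

/-- `𝒞_p`: the norm of point evaluation at the origin in `PW^p`. -/
def Cconst (p : ℝ) : ℝ :=
  sSup { r : ℝ | ∃ f : ℂ → ℂ, MemPW p f ∧ (∃ z : ℂ, f z ≠ 0) ∧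
    r = ‖f 0‖ ^ p / PWnorm p f }

/-- `φ` is an extremal function for exponent `p`. -/
def IsExtremal (p : ℝ) (φ : ℂ → ℂ) : Prop :=
  MemPW p φ ∧ φ 0 = 1 ∧
    ∀ f : ℂ → ℂ, MemPW p f → f 0 = 1 → PWnorm p φ ≤ PWnorm p f

lemma conj_conj_differentiable {φ : ℂ → ℂ} (h : Differentiable ℂ φ) :
    Differentiable ℂ (fun z => (starRingEnd ℂ) (φ ((starRingEnd ℂ) z))) := by
  intro z
  have hd : HasDerivAt φ (deriv φ ((starRingEnd ℂ) z)) ((starRingEnd ℂ) z) :=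
    (h _).hasDerivAt
  set d := deriv φ ((starRingEnd ℂ) z) with hdd
  have hφF : HasFDerivAt φ
      ((ContinuousLinearMap.smulRight (1 : ℂ →L[ℂ] ℂ) d).restrictScalars ℝ)
      ((starRingEnd ℂ) z) := hd.hasFDerivAt.restrictScalars ℝ
  have hc : HasFDerivAt (fun w : ℂ => (starRingEnd ℂ) w)
      (Complex.conjCLE.toContinuousLinearMap) z := Complex.conjCLE.hasFDerivAt
  have hc2 : HasFDerivAt (fun w : ℂ => (starRingEnd ℂ) w)
      (Complex.conjCLE.toContinuousLinearMap) (φ ((starRingEnd ℂ) z)) :=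
    Complex.conjCLE.hasFDerivAt
  have hcomp := (hc2.comp z (hφF.comp z hc))
  have H : ((ContinuousLinearMap.smulRight (1 : ℂ →L[ℂ] ℂ)
      ((starRingEnd ℂ) d)).restrictScalars ℝ) =
      (Complex.conjCLE.toContinuousLinearMap.comp
        (((ContinuousLinearMap.smulRight (1 : ℂ →L[ℂ] ℂ) d).restrictScalars ℝ).comp
          Complex.conjCLE.toContinuousLinearMap)) := by
    ext w
    simp [Complex.conjCLE, mul_comm]
  have : HasFDerivAt (fun w => (starRingEnd ℂ) (φ ((starRingEnd ℂ) w)))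
      (ContinuousLinearMap.smulRight (1 : ℂ →L[ℂ] ℂ) ((starRingEnd ℂ) d)) z :=
    hasFDerivAt_of_restrictScalars ℝ hcomp H
  exact this.differentiableAt

/-- Every extremal function for exponent `p` is real-valued on `ℝ`. -/
theorem extremal_real_on_real (p : ℝ) (hp : 0 < p) (φ : ℂ → ℂ)
    (hφ : IsExtremal p φ) :
    ∀ x : ℝ, (φ x).im = 0 := by
  obtain ⟨⟨hdiff, htype, hint⟩, h0, hmin⟩ := hφ
  set g : ℂ → ℂ := fun z => (φ z + (starRingEnd ℂ) (φ ((starRingEnd ℂ) z))) / 2 with hg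
  -- g on real axis equals the real part of φ
  have hgx : ∀ x : ℝ, g x = ((φ x).re : ℂ) := by
    intro x
    have : (starRingEnd ℂ) (x : ℂ) = (x : ℂ) := Complex.conj_ofReal x
    simp only [hg, this, Complex.add_conj]
    push_cast
    ring
  have habs_le : ∀ x : ℝ, ‖g x‖ ≤ ‖φ x‖ := by
    intro x
    rw [hgx x, Complex.norm_real, Real.norm_eq_abs]
    exact Complex.abs_re_le_norm (φ x)
  have hgdiff : Differentiable ℂ g := by
    exact (hdiff.add (conj_conj_differentiable hdiff)).div_const 2
  have hgcont : Continuous g := hgdiff.continuous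
  have hgpow_cont : Continuous (fun x : ℝ => ‖g x‖ ^ p) := by
    apply Continuous.rpow_const
    · exact continuous_norm.comp (hgcont.comp Complex.continuous_ofReal)
    · exact fun _ => Or.inr hp.le
  have hgint : Integrable (fun x : ℝ => ‖g x‖ ^ p) := by
    apply hint.mono' hgpow_cont.aestronglyMeasurable
    filter_upwards with x
    rw [Real.norm_of_nonneg (Real.rpow_nonneg (norm_nonneg _) p)]
    exact Real.rpow_le_rpow (norm_nonneg _) (habs_le x) hp.le
  have hgtype : ExpTypePi g := by
    intro ε hε
    obtain ⟨C, hC, hCb⟩ := htype ε hε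
    refine ⟨C, hC, fun z => ?_⟩
    have h1 := hCb z
    have h2 := hCb ((starRingEnd ℂ) z)
    rw [Complex.norm_conj] at h2
    calc ‖g z‖ ≤ (‖φ z‖
          + ‖(starRingEnd ℂ) (φ ((starRingEnd ℂ) z))‖) / 2 := by
          simp only [hg]
          rw [norm_div]
          simp only [Complex.norm_ofNat]
          gcongr
          exact norm_add_le _ _
      _ ≤ C * Real.exp ((Real.pi + ε) * ‖z‖) := by
          rw [Complex.norm_conj]
          linarith
  have hg0 : g 0 = 1 := by
    simp [hg, h0]
  have hle : PWnorm p φ ≤ PWnorm p g := hmin g ⟨hgdiff, hgtype, hgint⟩ hg0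
  have hge : PWnorm p g ≤ PWnorm p φ := by
    apply integral_mono hgint hint
    intro x
    exact Real.rpow_le_rpow (norm_nonneg _) (habs_le x) hp.le
  have heq : PWnorm p φ = PWnorm p g := le_antisymm hle hge
  -- the nonnegative integrand |φ|^p - |g|^p has zero integral
  have hsubint : Integrable (fun x : ℝ => ‖φ x‖ ^ p - ‖g x‖ ^ p) :=
    hint.sub hgint
  have hzero : ∫ x : ℝ, (‖φ x‖ ^ p - ‖g x‖ ^ p) = 0 := by
    rw [integral_sub hint hgint]
    have : PWnorm p φ = ∫ x : ℝ, ‖φ x‖ ^ p := rfl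
    have : PWnorm p g = ∫ x : ℝ, ‖g x‖ ^ p := rfl
    simp only [PWnorm] at heq
    linarith [heq]
  have hnonneg : 0 ≤ᵐ[volume] fun x : ℝ => ‖φ x‖ ^ p - ‖g x‖ ^ p := by
    filter_upwards with x
    simp only [Pi.zero_apply, sub_nonneg]
    exact Real.rpow_le_rpow (norm_nonneg _) (habs_le x) hp.le
  have hae : (fun x : ℝ => ‖φ x‖ ^ p - ‖g x‖ ^ p) =ᵐ[volume] 0 :=
    (integral_eq_zero_iff_of_nonneg_ae hnonneg hsubint).mp hzero
  -- hence |φ x| = |Re φ x| a.e., so Im φ = 0 a.e.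
  have him : (fun x : ℝ => (φ x).im) =ᵐ[volume] 0 := by
    filter_upwards [hae] with x hx
    simp only [Pi.zero_apply] at hx ⊢
    have hxeq : ‖φ x‖ ^ p = ‖g x‖ ^ p := by linarith
    have habs : ‖φ x‖ = ‖g x‖ := by
      rcases lt_trichotomy (‖g x‖) (‖φ x‖) with h | h | h
      · exact absurd hxeq (ne_of_gt (Real.rpow_lt_rpow (norm_nonneg _) h hp))
      · exact h.symm
      · exact absurd hxeq.symm (ne_of_gt (Real.rpow_lt_rpow (norm_nonneg _) h hp))
    rw [hgx x, Complex.norm_real, Real.norm_eq_abs] at habs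
    have h1 : ‖φ x‖ ^ 2 = (φ x).re ^ 2 + (φ x).im ^ 2 := by
      rw [Complex.sq_norm, Complex.normSq_apply]; ring
    have h2 : ‖φ x‖ ^ 2 = (φ x).re ^ 2 := by
      rw [habs, sq_abs]
    nlinarith [h1, h2]
  have hcont : Continuous (fun x : ℝ => (φ x).im) :=
    Complex.continuous_im.comp (hdiff.continuous.comp Complex.continuous_ofReal)
  have := (Continuous.ae_eq_iff_eq volume hcont continuous_const).mp him
  intro x
  exact congrFun this x

end
end

section
/- Fix 0 < p < ∞ and let φ be an extremal function for exponent p. Then: (a) for every real zero t of φ, ∫_ℝ |φ(x)|^p · x/(x−t) dx = 0; (b) for any two distinct real zeros t ≠ s of φ, ∫_ℝ |φ(x)|^p · x²/((x−t)(x−s)) dx = 0. -/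
open MeasureTheory Real Filter Set Topology

noncomputable section

lemma aux_norm_ofReal (r : ℝ) : ‖(r : ℂ)‖ = |r| := by simp

-- (a+b)^p ≤ 2^p (a^p + b^p)
lemma aux_add_rpow (p a b : ℝ) (hp : 0 < p) (ha : 0 ≤ a) (hb : 0 ≤ b) :
    (a + b) ^ p ≤ 2 ^ p * (a ^ p + b ^ p) := by
  have h1 : a + b ≤ 2 * max a b := by
    rcases le_total a b with h | h
    · simp [max_eq_right h]; linarith
    · simp [max_eq_left h]; linarith
  have h2 : (a + b) ^ p ≤ (2 * max a b) ^ p :=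
    Real.rpow_le_rpow (by linarith) h1 hp.le
  have h3 : (2 * max a b) ^ p = 2 ^ p * (max a b) ^ p :=
    Real.mul_rpow (by norm_num) (le_max_of_le_left ha)
  have h4 : (max a b) ^ p ≤ a ^ p + b ^ p := by
    rcases le_total a b with h | h
    · rw [max_eq_right h]
      nlinarith [Real.rpow_nonneg ha p]
    · rw [max_eq_left h]
      nlinarith [Real.rpow_nonneg hb p]
  calc (a + b) ^ p ≤ 2 ^ p * (max a b) ^ p := by rw [← h3]; exact h2
    _ ≤ 2 ^ p * (a ^ p + b ^ p) := by
        have : (0:ℝ) < 2 ^ p := Real.rpow_pos_of_pos (by norm_num) p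
        nlinarith

-- MVT bound for small v
lemma aux_small (p v : ℝ) (hp : 0 < p) (hv : |v| ≤ 1/2) :
    abs (|1 + v| ^ p - 1) ≤ p * (2 ^ (1 - p) + 2 ^ (p - 1)) * |v| := by
  have hpos : ∀ s ∈ Icc (0:ℝ) 1, (1:ℝ)/2 ≤ 1 + s * v := by
    intro s hs
    have h1 : |s * v| ≤ 1/2 := by
      rw [abs_mul]
      have : |s| ≤ 1 := by rw [abs_of_nonneg hs.1]; exact hs.2
      nlinarith [abs_nonneg v]
    have := neg_abs_le (s * v)
    linarith
  set B : ℝ := p * (2 ^ (1 - p) + 2 ^ (p - 1)) with hB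
  have hderiv : ∀ s ∈ Icc (0:ℝ) 1,
      HasDerivWithinAt (fun s : ℝ => (1 + s * v) ^ p) (p * (1 + s * v) ^ (p - 1) * v) (Icc 0 1) s := by
    intro s hs
    have h0 : (1 + s * v) ≠ 0 := by have := hpos s hs; linarith
    have h : HasDerivAt (fun s : ℝ => 1 + s * v) v s := by
      simpa using ((hasDerivAt_id s).mul_const v).const_add 1
    have hd : HasDerivAt (fun s : ℝ => (1 + s * v) ^ p) (v * p * (1 + s * v) ^ (p - 1)) s :=
      h.rpow_const (Or.inl h0)
    have heq : p * (1 + s * v) ^ (p - 1) * v = v * p * (1 + s * v) ^ (p - 1) := by ring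
    rw [heq]
    exact hd.hasDerivWithinAt
  have hbound : ∀ s ∈ Icc (0:ℝ) 1, ‖p * (1 + s * v) ^ (p - 1) * v‖ ≤ B * |v| := by
    intro s hs
    have h12 : (1:ℝ)/2 ≤ 1 + s * v := hpos s hs
    have h32 : 1 + s * v ≤ 2 := by
      have h1 : |s * v| ≤ 1/2 := by
        rw [abs_mul]
        have : |s| ≤ 1 := by rw [abs_of_nonneg hs.1]; exact hs.2
        nlinarith [abs_nonneg v]
      have := le_abs_self (s * v)
      linarith
    have hb : (1 + s * v) ^ (p - 1) ≤ 2 ^ (1 - p) + 2 ^ (p - 1) := by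
      rcases le_total p 1 with h | h
      · have h1 : (1 + s * v) ^ (p - 1) ≤ (1/2 : ℝ) ^ (p - 1) :=
          Real.rpow_le_rpow_of_nonpos (by norm_num) h12 (by linarith)
        have h2 : ((1:ℝ)/2) ^ (p - 1) = 2 ^ (1 - p) := by
          rw [one_div, Real.inv_rpow (by norm_num), ← Real.rpow_neg (by norm_num)]
          ring_nf
        calc (1 + s * v) ^ (p-1) ≤ (1/2:ℝ) ^ (p-1) := h1
          _ = 2 ^ (1-p) := h2
          _ ≤ 2 ^ (1-p) + 2 ^ (p-1) := le_add_of_nonneg_right (by positivity)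
      · have : (1 + s * v) ^ (p - 1) ≤ (2:ℝ) ^ (p - 1) :=
          Real.rpow_le_rpow (by linarith) h32 (by linarith)
        calc (1 + s * v) ^ (p-1) ≤ (2:ℝ) ^ (p-1) := this
          _ ≤ 2 ^ (1-p) + 2 ^ (p-1) := le_add_of_nonneg_left (by positivity)
    have hnn : 0 ≤ (1 + s * v) ^ (p - 1) := Real.rpow_nonneg (by linarith) _
    rw [Real.norm_eq_abs, abs_mul, abs_mul, abs_of_pos hp, abs_of_nonneg hnn, hB]
    have habs : 0 ≤ |v| := abs_nonneg v
    calc p * (1 + s * v) ^ (p - 1) * |v| ≤ p * (2 ^ (1 - p) + 2 ^ (p - 1)) * |v| :=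
      mul_le_mul_of_nonneg_right (mul_le_mul_of_nonneg_left hb hp.le) habs
      _ = B * |v| := rfl
  have key := Convex.norm_image_sub_le_of_norm_hasDerivWithin_le hderiv hbound (convex_Icc 0 1)
    (Set.mem_Icc.mpr ⟨le_refl 0, by norm_num⟩) (Set.mem_Icc.mpr ⟨by norm_num, le_refl 1⟩)
  have h0 : (1 + (0:ℝ) * v) ^ p = 1 := by norm_num
  have hv1 : (1:ℝ)/2 ≤ 1 + v := by
    have := hpos 1 (Set.mem_Icc.mpr ⟨by norm_num, le_refl 1⟩)
    simpa using this
  have h1v : |1 + v| ^ p = (1 + v) ^ p := by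
    rw [abs_of_pos (by linarith)]
  simp only [Real.norm_eq_abs] at key
  rw [h1v]
  calc |(1 + v) ^ p - 1| = |(1 + 1 * v) ^ p - (1 + 0 * v) ^ p| := by norm_num
    _ ≤ B * |v| * |(1:ℝ) - 0| := key
    _ = B * |v| := by norm_num

-- global quotient bound
lemma aux_quot (p : ℝ) (hp : 0 < p) : ∃ K : ℝ, 0 < K ∧ ∀ lam u : ℝ, lam ≠ 0 → |lam| ≤ 1 →
    |(|1 + lam * u| ^ p - 1)| / |lam| ≤ K * (|u| + |u| ^ p) := by
  refine ⟨p * (2 ^ (1 - p) + 2 ^ (p - 1)) + (3 ^ p + 2 ^ p) * 2 ^ (1 - p) + (3 ^ p + 2 ^ p),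
    by positivity, ?_⟩
  intro lam u hlam hlam1
  have hlampos : 0 < |lam| := abs_pos.mpr hlam
  have hKnn : (0:ℝ) ≤ (3:ℝ) ^ p + 2 ^ p := by positivity
  set v := lam * u with hv
  have hvu : |v| = |lam| * |u| := abs_mul lam u
  have hunn : 0 ≤ |u| := abs_nonneg u
  have hupnn : 0 ≤ |u| ^ p := Real.rpow_nonneg hunn p
  rcases le_total |v| (1/2) with hsm | hlg
  · -- small case
    have h := aux_small p v hp hsm
    have : |(|1 + v| ^ p - 1)| / |lam| ≤ p * (2 ^ (1 - p) + 2 ^ (p - 1)) * |u| := by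
      rw [div_le_iff₀ hlampos]
      calc |(|1 + v| ^ p - 1)| ≤ p * (2 ^ (1 - p) + 2 ^ (p - 1)) * |v| := h
        _ = p * (2 ^ (1 - p) + 2 ^ (p - 1)) * |u| * |lam| := by rw [hvu]; ring
    refine this.trans ?_
    have hb : (0:ℝ) ≤ p * (2 ^ (1 - p) + 2 ^ (p - 1)) := by positivity
    have e1 : (0:ℝ) ≤ (3 ^ p + 2 ^ p) * 2 ^ (1 - p) := by positivity
    nlinarith [mul_nonneg hb hupnn, mul_nonneg hKnn hunn, mul_nonneg hKnn hupnn,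
      mul_nonneg e1 hunn, mul_nonneg e1 hupnn]
  · -- large case : 1/2 ≤ |v|
    have hvpos : 0 < |v| := by linarith
    have h1 : |(|1 + v| ^ p - 1)| ≤ (3 ^ p + 2 ^ p) * |v| ^ p := by
      have ha : |1 + v| ^ p ≤ 3 ^ p * |v| ^ p := by
        have h3 : |1 + v| ≤ 3 * |v| := by
          calc |1 + v| ≤ 1 + |v| := by simpa using abs_add_le 1 v
            _ ≤ 3 * |v| := by linarith
        calc |1 + v| ^ p ≤ (3 * |v|) ^ p := Real.rpow_le_rpow (abs_nonneg _) h3 hp.le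
          _ = 3 ^ p * |v| ^ p := Real.mul_rpow (by norm_num) (abs_nonneg v)
      have hb : (1:ℝ) ≤ 2 ^ p * |v| ^ p := by
        have h2 : (1:ℝ) ≤ 2 * |v| := by linarith
        calc (1:ℝ) = 1 ^ p := (Real.one_rpow p).symm
          _ ≤ (2 * |v|) ^ p := Real.rpow_le_rpow (by norm_num) h2 hp.le
          _ = 2 ^ p * |v| ^ p := Real.mul_rpow (by norm_num) (abs_nonneg v)
      have habs : |(|1 + v| ^ p - 1)| ≤ |1 + v| ^ p + 1 := by
        have h0 : (0:ℝ) ≤ |1 + v| ^ p := Real.rpow_nonneg (abs_nonneg _) p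
        rw [abs_sub_le_iff]; constructor <;> nlinarith
      nlinarith
    rcases le_total p 1 with hple | hpge
    · -- p ≤ 1 : |v|^p ≤ 2^(1-p) |v|
      have hvp : |v| ^ p ≤ 2 ^ (1 - p) * |v| := by
        have h2 : |v| ^ (p - 1) ≤ (1/2:ℝ) ^ (p - 1) :=
          Real.rpow_le_rpow_of_nonpos (by norm_num) hlg (by linarith)
        have h3 : ((1:ℝ)/2) ^ (p - 1) = 2 ^ (1 - p) := by
          rw [one_div, Real.inv_rpow (by norm_num), ← Real.rpow_neg (by norm_num)]
          ring_nf
        have h4 : |v| ^ p = |v| ^ (p - 1) * |v| := by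
          rw [← Real.rpow_add_one hvpos.ne' (p-1)]; ring_nf
        rw [h4]
        exact mul_le_mul_of_nonneg_right (h2.trans_eq h3) (abs_nonneg v)
      have : |(|1 + v| ^ p - 1)| / |lam| ≤ (3 ^ p + 2 ^ p) * 2 ^ (1 - p) * |u| := by
        rw [div_le_iff₀ hlampos]
        calc |(|1 + v| ^ p - 1)| ≤ (3 ^ p + 2 ^ p) * |v| ^ p := h1
          _ ≤ (3 ^ p + 2 ^ p) * (2 ^ (1 - p) * |v|) := mul_le_mul_of_nonneg_left hvp hKnn
          _ = (3 ^ p + 2 ^ p) * 2 ^ (1 - p) * |u| * |lam| := by rw [hvu]; ring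
      refine this.trans ?_
      have hb1 : (0:ℝ) ≤ (3 ^ p + 2 ^ p) * 2 ^ (1 - p) := by positivity
      have hb2 : (0:ℝ) ≤ p * (2 ^ (1 - p) + 2 ^ (p - 1)) := by positivity
      nlinarith [mul_nonneg hb1 hunn, mul_nonneg hb1 hupnn, mul_nonneg hb2 hunn,
        mul_nonneg hb2 hupnn, mul_nonneg hKnn hunn, mul_nonneg hKnn hupnn]
    · -- 1 ≤ p : |lam|^(p-1) ≤ 1
      have hvp : |v| ^ p = |lam| ^ p * |u| ^ p := by
        rw [hvu]; exact Real.mul_rpow (abs_nonneg lam) (abs_nonneg u)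
      have hlp : |lam| ^ p ≤ |lam| := by
        calc |lam| ^ p ≤ |lam| ^ (1:ℝ) :=
          Real.rpow_le_rpow_of_exponent_ge hlampos hlam1 hpge
          _ = |lam| := Real.rpow_one _
      have : |(|1 + v| ^ p - 1)| / |lam| ≤ (3 ^ p + 2 ^ p) * |u| ^ p := by
        rw [div_le_iff₀ hlampos]
        calc |(|1 + v| ^ p - 1)| ≤ (3 ^ p + 2 ^ p) * |v| ^ p := h1
          _ = (3 ^ p + 2 ^ p) * |lam| ^ p * |u| ^ p := by rw [hvp]; ring
          _ ≤ (3 ^ p + 2 ^ p) * |lam| * |u| ^ p := by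
              apply mul_le_mul_of_nonneg_right _ hupnn
              exact mul_le_mul_of_nonneg_left hlp hKnn
          _ = (3 ^ p + 2 ^ p) * |u| ^ p * |lam| := by ring
      refine this.trans ?_
      have hb1 : (0:ℝ) ≤ (3 ^ p + 2 ^ p) * 2 ^ (1 - p) := by positivity
      have hb2 : (0:ℝ) ≤ p * (2 ^ (1 - p) + 2 ^ (p - 1)) := by positivity
      nlinarith [mul_nonneg hb1 hunn, mul_nonneg hb1 hupnn, mul_nonneg hb2 hunn,
        mul_nonneg hb2 hupnn, mul_nonneg hKnn hunn, mul_nonneg hKnn hupnn]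

-- integrability of |x - c| ^ q near singularities
lemma aux_abs_rpow_integrable (q : ℝ) (hq : -1 < q) (c a b : ℝ) :
    IntegrableOn (fun x : ℝ => |x - c| ^ q) (Icc a b) volume := by
  have key : ∀ r : ℝ, 0 ≤ r → IntervalIntegrable (fun x : ℝ => |x| ^ q) volume 0 r := by
    intro r hr
    have h1 : IntervalIntegrable (fun x : ℝ => x ^ q) volume 0 r := intervalIntegral.intervalIntegrable_rpow' hq
    rw [intervalIntegrable_iff_integrableOn_Ioc_of_le hr] at h1 ⊢
    exact h1.congr_fun (fun x hx => by rw [abs_of_pos hx.1]) measurableSet_Ioc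
  have key2 : ∀ u w : ℝ, IntervalIntegrable (fun x : ℝ => |x| ^ q) volume u w := by
    have key' : ∀ r : ℝ, IntervalIntegrable (fun x : ℝ => |x| ^ q) volume 0 r := by
      intro r
      rcases le_total 0 r with h | h
      · exact key r h
      · have h2 := (key (-r) (by linarith)).symm
        have h3 := (IntervalIntegrable.iff_comp_neg (f := fun x : ℝ => |x| ^ q) (a := -r) (b := 0)).mp h2
        simpa using h3.symm
    intro u w
    exact (key' u).symm.trans (key' w)
  have h4 : IntervalIntegrable (fun x : ℝ => |x - c| ^ q) volume (a - c + c) (b - c + c) :=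
    (key2 (a - c) (b - c)).comp_sub_right c
  have h5 : IntervalIntegrable (fun x : ℝ => |x - c| ^ q) volume a b := by
    simpa using h4
  rcases le_total a b with h | h
  · rw [intervalIntegrable_iff_integrableOn_Ioc_of_le h] at h5
    rw [integrableOn_Icc_iff_integrableOn_Ioc]
    exact h5
  · rcases eq_or_lt_of_le h with rfl | hlt
    · rw [intervalIntegrable_iff_integrableOn_Ioc_of_le le_rfl] at h5
      rw [integrableOn_Icc_iff_integrableOn_Ioc]
      exact h5
    · rw [Icc_eq_empty_of_lt hlt]
      exact integrableOn_empty

lemma aux_type_add (f g : ℂ → ℂ) (c : ℂ) (hf : ExpTypePi f) (hg : ExpTypePi g) :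
    ExpTypePi (fun z => f z + c * g z) := by
  intro ε hε
  obtain ⟨C1, hC1, h1⟩ := hf ε hε
  obtain ⟨C2, hC2, h2⟩ := hg ε hε
  refine ⟨C1 + ‖c‖ * C2 + 1, by positivity, fun z => ?_⟩
  have he : 0 < Real.exp ((Real.pi + ε) * ‖z‖) := Real.exp_pos _
  calc ‖f z + c * g z‖ ≤ ‖f z‖ + ‖c‖ * ‖g z‖ := by
        simpa [norm_mul] using norm_add_le (f z) (c * g z)
    _ ≤ C1 * Real.exp ((Real.pi + ε) * ‖z‖)
        + ‖c‖ * (C2 * Real.exp ((Real.pi + ε) * ‖z‖)) := by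
        have := h1 z
        have h2z := h2 z
        have hca : (0:ℝ) ≤ ‖c‖ := norm_nonneg c
        nlinarith
    _ ≤ (C1 + ‖c‖ * C2 + 1) * Real.exp ((Real.pi + ε) * ‖z‖) := by nlinarith

lemma aux_type_of_bound (φ g : ℂ → ℂ) (hφ : ExpTypePi φ) (hg : Continuous g) (R A : ℝ)
    (hA : 0 ≤ A) (h : ∀ z : ℂ, R ≤ ‖z‖ → ‖g z‖ ≤ A * ‖φ z‖) :
    ExpTypePi g := by
  intro ε hε
  obtain ⟨C, hC, hCb⟩ := hφ ε hε
  obtain ⟨M, hM⟩ := (isCompact_closedBall (0:ℂ) R).exists_bound_of_continuousOn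
    ((continuous_norm.comp hg).continuousOn)
  refine ⟨max M 0 + A * C + 1, by positivity, fun z => ?_⟩
  have hexp : 1 ≤ Real.exp ((Real.pi + ε) * ‖z‖) := by
    rw [Real.one_le_exp_iff]
    have := Real.pi_pos
    positivity
  rcases le_total (‖z‖) R with hz | hz
  · have hzm : z ∈ Metric.closedBall (0:ℂ) R := by
      simpa [Metric.mem_closedBall, Complex.dist_eq] using hz
    have := hM z hzm
    simp only [Function.comp_apply, Real.norm_eq_abs] at this
    have h1 : ‖g z‖ ≤ max M 0 := le_trans (by simpa using this) (le_max_left M 0)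
    have h2 : (0:ℝ) ≤ A * C := by positivity
    have h3 : (0:ℝ) ≤ max M 0 := le_max_right M 0
    calc ‖g z‖ ≤ max M 0 := h1
      _ = (max M 0) * 1 := (mul_one _).symm
      _ ≤ (max M 0 + A * C + 1) * Real.exp ((Real.pi + ε) * ‖z‖) := by
          apply mul_le_mul (by linarith) hexp zero_le_one (by linarith)
  · have h1 := h z hz
    have h2 := hCb z
    have hgz : ‖g z‖ ≤ A * C * Real.exp ((Real.pi + ε) * ‖z‖) := by
      calc ‖g z‖ ≤ A * ‖φ z‖ := h1
        _ ≤ A * (C * Real.exp ((Real.pi + ε) * ‖z‖)) :=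
            mul_le_mul_of_nonneg_left h2 hA
        _ = A * C * Real.exp ((Real.pi + ε) * ‖z‖) := by ring
    have h3 : (0:ℝ) ≤ max M 0 := le_max_right M 0
    have hep : (0:ℝ) < Real.exp ((Real.pi + ε) * ‖z‖) := Real.exp_pos _
    calc ‖g z‖ ≤ A * C * Real.exp ((Real.pi + ε) * ‖z‖) := hgz
      _ ≤ (max M 0 + A * C + 1) * Real.exp ((Real.pi + ε) * ‖z‖) := by nlinarith

lemma aux_meas_rpow (q c : ℝ) : Measurable (fun x : ℝ => |x - c| ^ q) := by
  have heq : (fun x : ℝ => |x - c| ^ q) = fun x =>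
      if x = c then (if q = 0 then 1 else 0) else Real.exp (Real.log |x - c| * q) := by
    funext x
    by_cases h : x = c
    · subst h
      simp only [sub_self, abs_zero, if_pos rfl]
      by_cases hq : q = 0
      · simp [hq]
      · simp [hq, Real.zero_rpow hq]
    · rw [if_neg h, Real.rpow_def_of_pos (abs_pos.mpr (sub_ne_zero.mpr h))]
  rw [heq]
  exact Measurable.ite (MeasurableSet.singleton c) measurable_const
    (((Real.measurable_log.comp ((measurable_id.sub_const c).abs)).mul_const q).exp)

lemma aux_rpow_bound (q a b x : ℝ) (ha : 0 < a) (hax : a ≤ x) (hxb : x ≤ b) :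
    x ^ q ≤ a ^ q + b ^ q := by
  rcases le_total q 0 with h | h
  · have h1 : x ^ q ≤ a ^ q := Real.rpow_le_rpow_of_nonpos ha hax h
    have h2 : (0:ℝ) ≤ b ^ q := Real.rpow_nonneg (by linarith) q
    linarith
  · have h1 : x ^ q ≤ b ^ q := Real.rpow_le_rpow (by linarith) hxb h
    have h2 : (0:ℝ) ≤ a ^ q := Real.rpow_nonneg ha.le q
    linarith

lemma aux_two_sing (q : ℝ) (hq : -1 < q) (t s a b : ℝ) (hts : t ≠ s) :
    IntegrableOn (fun x : ℝ => |x - t| ^ q * |x - s| ^ q) (Icc a b) volume := by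
  set d : ℝ := |t - s| with hd
  have hd0 : 0 < d := abs_pos.mpr (sub_ne_zero.mpr hts)
  set E : ℝ := |a| + |b| + |s| + |t| + 1 with hE
  have hE0 : 0 < E := by positivity
  have hmeas : Measurable (fun x : ℝ => |x - t| ^ q * |x - s| ^ q) :=
    (aux_meas_rpow q t).mul (aux_meas_rpow q s)
  have hxE : ∀ x ∈ Icc a b, ∀ c : ℝ, |c| ≤ |s| + |t| → |x - c| ≤ E := by
    intro x hx c hc
    have h1 : |x| ≤ |a| + |b| := by
      have ha1 := hx.1; have hb1 := hx.2
      have ha2 : (0:ℝ) ≤ |a| := abs_nonneg a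
      have hb2 : (0:ℝ) ≤ |b| := abs_nonneg b
      rcases le_total 0 x with h | h
      · rw [abs_of_nonneg h]; have := le_abs_self b; linarith
      · rw [abs_of_nonpos h]; have := neg_le_abs a; linarith
    calc |x - c| ≤ |x| + |c| := abs_sub x c
      _ ≤ E := by rw [hE]; linarith
  -- covering
  have hcover : Icc a b ⊆ (Icc a b ∩ {x : ℝ | d/2 ≤ |x - s|}) ∪
      (Icc a b ∩ {x : ℝ | d/2 ≤ |x - t|}) := by
    intro x hx
    have h1 : d ≤ |x - t| + |x - s| := by
      calc d = |t - s| := rfl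
        _ ≤ |t - x| + |x - s| := abs_sub_le t x s
        _ = |x - t| + |x - s| := by rw [abs_sub_comm t x]
    rcases le_total (d/2) (|x - s|) with h | h
    · exact Or.inl ⟨hx, h⟩
    · exact Or.inr ⟨hx, by simp only [mem_setOf_eq]; linarith⟩
  have hsetA : MeasurableSet {x : ℝ | d/2 ≤ |x - s|} :=
    (isClosed_le continuous_const ((continuous_id.sub continuous_const).abs)).measurableSet
  have hsetB : MeasurableSet {x : ℝ | d/2 ≤ |x - t|} :=
    (isClosed_le continuous_const ((continuous_id.sub continuous_const).abs)).measurableSet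
  -- piece A : away from s, singular at t
  have hA : IntegrableOn (fun x : ℝ => |x - t| ^ q * |x - s| ^ q)
      (Icc a b ∩ {x : ℝ | d/2 ≤ |x - s|}) volume := by
    have hb0 : IntegrableOn (fun x : ℝ => ((d/2) ^ q + E ^ q) * |x - t| ^ q) (Icc a b) volume :=
      (aux_abs_rpow_integrable q hq t a b).const_mul _
    have hbint : IntegrableOn (fun x : ℝ => ((d/2) ^ q + E ^ q) * |x - t| ^ q)
        (Icc a b ∩ {x : ℝ | d/2 ≤ |x - s|}) volume := hb0.mono_set inter_subset_left
    refine hbint.integrable.mono' (hmeas.aestronglyMeasurable.restrict) ?_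
    rw [ae_restrict_iff' (measurableSet_Icc.inter hsetA)]
    refine Eventually.of_forall fun x hx => ?_
    have h1 : |x - s| ^ q ≤ (d/2) ^ q + E ^ q :=
      aux_rpow_bound q (d/2) E _ (by linarith) hx.2 (hxE x hx.1 s (by linarith [abs_nonneg t]))
    have h2 : (0:ℝ) ≤ |x - t| ^ q := Real.rpow_nonneg (abs_nonneg _) q
    rw [Real.norm_eq_abs, abs_of_nonneg (mul_nonneg h2 (Real.rpow_nonneg (abs_nonneg _) q))]
    calc |x - t| ^ q * |x - s| ^ q ≤ |x - t| ^ q * ((d/2) ^ q + E ^ q) :=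
          mul_le_mul_of_nonneg_left h1 h2
      _ = ((d/2) ^ q + E ^ q) * |x - t| ^ q := by ring
  have hB : IntegrableOn (fun x : ℝ => |x - t| ^ q * |x - s| ^ q)
      (Icc a b ∩ {x : ℝ | d/2 ≤ |x - t|}) volume := by
    have hb0 : IntegrableOn (fun x : ℝ => ((d/2) ^ q + E ^ q) * |x - s| ^ q) (Icc a b) volume :=
      (aux_abs_rpow_integrable q hq s a b).const_mul _
    have hbint : IntegrableOn (fun x : ℝ => ((d/2) ^ q + E ^ q) * |x - s| ^ q)
        (Icc a b ∩ {x : ℝ | d/2 ≤ |x - t|}) volume := hb0.mono_set inter_subset_left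
    refine hbint.integrable.mono' (hmeas.aestronglyMeasurable.restrict) ?_
    rw [ae_restrict_iff' (measurableSet_Icc.inter hsetB)]
    refine Eventually.of_forall fun x hx => ?_
    have h1 : |x - t| ^ q ≤ (d/2) ^ q + E ^ q :=
      aux_rpow_bound q (d/2) E _ (by linarith) hx.2 (hxE x hx.1 t (by linarith [abs_nonneg s]))
    have h2 : (0:ℝ) ≤ |x - s| ^ q := Real.rpow_nonneg (abs_nonneg _) q
    rw [Real.norm_eq_abs, abs_of_nonneg (mul_nonneg (Real.rpow_nonneg (abs_nonneg _) q) h2)]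
    exact mul_le_mul_of_nonneg_right h1 h2
  exact (hA.union hB).mono_set hcover

lemma master (p : ℝ) (hp : 0 < p) (φ : ℂ → ℂ) (hφ : IsExtremal p φ)
    (u : ℝ → ℝ) (hu : Measurable u) (g : ℂ → ℂ)
    (hgd : Differentiable ℂ g) (hgt : ExpTypePi g) (hg0 : g 0 = 0)
    (hgu : ∀ᵐ x : ℝ, g x = (u x : ℂ) * φ x)
    (hint1 : Integrable (fun x : ℝ => ‖φ x‖ ^ p * |u x|))
    (hint2 : Integrable (fun x : ℝ => ‖g x‖ ^ p)) :
    ∫ x : ℝ, ‖φ x‖ ^ p * u x = 0 := by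
  obtain ⟨⟨hφd, hφt, hφi⟩, hφ0, hmin⟩ := hφ
  have hφc : Continuous φ := hφd.continuous
  have hgc : Continuous g := hgd.continuous
  -- the perturbed family
  set f : ℝ → ℂ → ℂ := fun lam z => φ z + (lam : ℂ) * g z with hf
  -- integrability of |f lam|^p on ℝ
  have hNc : ∀ lam : ℝ, Continuous (fun x : ℝ => ‖f lam x‖ ^ p) := by
    intro lam
    apply Continuous.rpow_const
    · exact continuous_norm.comp
        ((hφc.comp Complex.continuous_ofReal).add
          (continuous_const.mul (hgc.comp Complex.continuous_ofReal)))
    · exact fun x => Or.inr hp.le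
  have hNint : ∀ lam : ℝ, Integrable (fun x : ℝ => ‖f lam x‖ ^ p) := by
    intro lam
    have hbi : Integrable (fun x : ℝ =>
        2 ^ p * ‖φ x‖ ^ p + (2 ^ p * |lam| ^ p) * ‖g x‖ ^ p) :=
      (hφi.const_mul _).add (hint2.const_mul _)
    refine hbi.mono' (hNc lam).aestronglyMeasurable (Eventually.of_forall fun x => ?_)
    have h1 : ‖f lam x‖ ≤ ‖φ x‖ + |lam| * ‖g x‖ := by
      calc ‖f lam x‖ ≤ ‖φ x‖ + ‖(lam:ℂ) * g x‖ :=
            norm_add_le _ _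
        _ = ‖φ x‖ + |lam| * ‖g x‖ := by
            rw [norm_mul, aux_norm_ofReal]
    have h2 : ‖f lam x‖ ^ p ≤ (‖φ x‖ + |lam| * ‖g x‖) ^ p :=
      Real.rpow_le_rpow (norm_nonneg _) h1 hp.le
    have h3 := aux_add_rpow p (‖φ x‖) (|lam| * ‖g x‖) hp
      (norm_nonneg _) (by positivity)
    have h4 : (|lam| * ‖g x‖) ^ p = |lam| ^ p * ‖g x‖ ^ p :=
      Real.mul_rpow (abs_nonneg _) (norm_nonneg _)
    rw [Real.norm_eq_abs, abs_of_nonneg (Real.rpow_nonneg (norm_nonneg _) p)]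
    calc ‖f lam x‖ ^ p
        ≤ 2 ^ p * (‖φ x‖ ^ p + (|lam| * ‖g x‖) ^ p) := h2.trans h3
      _ = 2 ^ p * ‖φ x‖ ^ p + (2 ^ p * |lam| ^ p) * ‖g x‖ ^ p := by
          rw [h4]; ring
  -- extremality gives nonnegativity
  have hF : ∀ lam : ℝ, 0 ≤ (∫ x : ℝ, ‖f lam x‖ ^ p)
      - ∫ x : ℝ, ‖φ x‖ ^ p := by
    intro lam
    have hmem : MemPW p (f lam) :=
      ⟨hφd.add ((hgd.const_mul _)), aux_type_add φ g lam hφt hgt, hNint lam⟩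
    have hval : f lam 0 = 1 := by simp [hf, hg0, hφ0]
    have := hmin (f lam) hmem hval
    simpa [PWnorm] using sub_nonneg.mpr this
  -- difference quotients
  set q : ℝ → ℝ → ℝ := fun lam x =>
    (‖f lam x‖ ^ p - ‖φ x‖ ^ p) / lam with hq
  have hqi : ∀ lam : ℝ, Integrable (q lam) := fun lam => ((hNint lam).sub hφi).div_const lam
  have hqint : ∀ lam : ℝ, (∫ x, q lam x)
      = ((∫ x : ℝ, ‖f lam x‖ ^ p) - ∫ x : ℝ, ‖φ x‖ ^ p) / lam := by
    intro lam
    rw [← integral_sub (hNint lam) hφi, ← integral_div]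
  -- dominating function
  obtain ⟨K, hK, hKb⟩ := aux_quot p hp
  set D : ℝ → ℝ := fun x => K * (‖φ x‖ ^ p * |u x| + ‖g x‖ ^ p) with hD
  have hDi : Integrable D := (hint1.add hint2).const_mul K
  -- key pointwise identity
  have habs : ∀ x : ℝ, g x = (u x : ℂ) * φ x → ∀ lam : ℝ,
      ‖f lam x‖ ^ p = |1 + lam * u x| ^ p * ‖φ x‖ ^ p := by
    intro x hx lam
    have h1 : f lam x = ((1 + lam * u x : ℝ) : ℂ) * φ x := by
      simp only [hf]; rw [hx]; push_cast; ring
    rw [h1, norm_mul, aux_norm_ofReal,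
      Real.mul_rpow (abs_nonneg _) (norm_nonneg _)]
  -- domination
  have hdom : ∀ lam : ℝ, lam ≠ 0 → |lam| ≤ 1 → ∀ᵐ x : ℝ, ‖q lam x‖ ≤ D x := by
    intro lam hlam hlam1
    filter_upwards [hgu] with x hx
    have hgabs : ‖g x‖ = |u x| * ‖φ x‖ := by
      rw [hx, norm_mul, aux_norm_ofReal]
    have hqx : q lam x = ‖φ x‖ ^ p * ((|1 + lam * u x| ^ p - 1) / lam) := by
      rw [hq]; simp only []
      rw [habs x hx lam]; ring
    rw [hqx, Real.norm_eq_abs, abs_mul,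
      abs_of_nonneg (Real.rpow_nonneg (norm_nonneg _) p), abs_div]
    have hb := hKb lam (u x) hlam hlam1
    have h2 : ‖φ x‖ ^ p * (|(|1 + lam * u x| ^ p - 1)| / |lam|)
        ≤ ‖φ x‖ ^ p * (K * (|u x| + |u x| ^ p)) :=
      mul_le_mul_of_nonneg_left hb (Real.rpow_nonneg (norm_nonneg _) p)
    refine h2.trans (le_of_eq ?_)
    rw [hD]; simp only []
    have h3 : ‖φ x‖ ^ p * |u x| ^ p = ‖g x‖ ^ p := by
      rw [hgabs, Real.mul_rpow (abs_nonneg _) (norm_nonneg _)]; ring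
    rw [← h3]; ring
  -- pointwise limit
  have hlim : ∀ᵐ x : ℝ, Tendsto (fun lam => q lam x) (𝓝[≠] (0:ℝ))
      (𝓝 (‖φ x‖ ^ p * (p * u x))) := by
    filter_upwards [hgu] with x hx
    set c := u x with hc
    set F : ℝ → ℝ := fun lam => |1 + lam * c| ^ p with hF'
    have hFd : HasDerivAt F (p * c) 0 := by
      have h1 : HasDerivAt (fun lam : ℝ => 1 + lam * c) c 0 := by
        simpa using ((hasDerivAt_id (0:ℝ)).mul_const c).const_add 1
      have h2 : HasDerivAt (fun lam : ℝ => (1 + lam * c) ^ p) (c * p * (1 + 0 * c) ^ (p - 1)) 0 :=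
        h1.rpow_const (Or.inl (by norm_num))
      have h3 : c * p * ((1:ℝ) + 0 * c) ^ (p - 1) = p * c := by
        rw [zero_mul, add_zero, Real.one_rpow]; ring
      rw [h3] at h2
      have hev : ∀ᶠ lam in 𝓝 (0:ℝ), F lam = (1 + lam * c) ^ p := by
        have hcont : Continuous (fun lam : ℝ => 1 + lam * c) :=
          continuous_const.add (continuous_id.mul continuous_const)
        have h0 : (0:ℝ) < 1 + 0 * c := by norm_num
        have := (hcont.tendsto 0).eventually (eventually_gt_nhds h0)
        filter_upwards [this] with lam hlam
        rw [hF']; simp only []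
        rw [abs_of_pos hlam]
      exact h2.congr_of_eventuallyEq hev
    have hslope := hasDerivAt_iff_tendsto_slope.mp hFd
    have hF0 : F 0 = 1 := by simp [hF']
    by_cases hφx : ‖φ x‖ = 0
    · have hz : ‖φ x‖ ^ p = 0 := by rw [hφx, Real.zero_rpow hp.ne']
      have : (fun lam => q lam x) = fun lam => (0:ℝ) := by
        funext lam
        rw [hq]; simp only []
        rw [habs x hx lam, hz]
        simp
      rw [this, hz]
      simpa using tendsto_const_nhds
    · have hqeq : ∀ lam : ℝ, lam ≠ 0 → q lam x = ‖φ x‖ ^ p * slope F 0 lam := by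
        intro lam hlam
        rw [slope_def_field, hF0]
        rw [hq]; simp only []
        rw [habs x hx lam]
        rw [hF']; simp only []
        field_simp
        ring
      have h5 : Tendsto (fun lam => ‖φ x‖ ^ p * slope F 0 lam) (𝓝[≠] (0:ℝ))
          (𝓝 (‖φ x‖ ^ p * (p * c))) := hslope.const_mul _
      refine h5.congr' ?_
      filter_upwards [self_mem_nhdsWithin] with lam hlam
      exact (hqeq lam hlam).symm
  -- dominated convergence
  have hmeas : ∀ᶠ lam in 𝓝[≠] (0:ℝ), AEStronglyMeasurable (q lam) volume :=
    Eventually.of_forall fun lam => (hqi lam).aestronglyMeasurable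
  have hbound : ∀ᶠ lam in 𝓝[≠] (0:ℝ), ∀ᵐ x : ℝ, ‖q lam x‖ ≤ D x := by
    have h1 : ∀ᶠ lam in 𝓝 (0:ℝ), |lam| ≤ 1 := by
      have := Metric.ball_mem_nhds (0:ℝ) zero_lt_one
      filter_upwards [this] with lam hlam
      rw [Metric.mem_ball, Real.dist_eq, sub_zero] at hlam
      exact hlam.le
    have h2 : ∀ᶠ lam in 𝓝[≠] (0:ℝ), lam ≠ 0 :=
      eventually_mem_nhdsWithin
    filter_upwards [h1.filter_mono nhdsWithin_le_nhds, h2] with lam hlam1 hlam2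
    exact hdom lam hlam2 hlam1
  have hDCT := tendsto_integral_filter_of_dominated_convergence D hmeas hbound hDi hlim
  -- signs
  have hqF : ∀ lam : ℝ, (∫ x, q lam x)
      = ((∫ x : ℝ, ‖f lam x‖ ^ p) - ∫ x : ℝ, ‖φ x‖ ^ p) / lam := hqint
  set L := ∫ x : ℝ, ‖φ x‖ ^ p * (p * u x) with hL
  have hL1 : 0 ≤ L := by
    have hmono : 𝓝[>] (0:ℝ) ≤ 𝓝[≠] (0:ℝ) :=
      nhdsWithin_mono 0 (fun x hx => ne_of_gt hx)
    refine ge_of_tendsto (hDCT.mono_left hmono) ?_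
    filter_upwards [eventually_mem_nhdsWithin] with lam (hlam : lam ∈ Ioi (0:ℝ))
    rw [hqF lam]
    exact div_nonneg (hF lam) (le_of_lt hlam)
  have hL2 : L ≤ 0 := by
    have hmono : 𝓝[<] (0:ℝ) ≤ 𝓝[≠] (0:ℝ) :=
      nhdsWithin_mono 0 (fun x hx => ne_of_lt hx)
    refine le_of_tendsto (hDCT.mono_left hmono) ?_
    filter_upwards [eventually_mem_nhdsWithin] with lam (hlam : lam ∈ Iio (0:ℝ))
    rw [hqF lam]
    exact div_nonpos_of_nonneg_of_nonpos (hF lam) (le_of_lt hlam)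
  have hL0 : L = 0 := le_antisymm hL2 hL1
  have hfin : L = p * ∫ x : ℝ, ‖φ x‖ ^ p * u x := by
    rw [hL, ← integral_const_mul]
    congr 1
    funext x
    ring
  rw [hfin] at hL0
  exact (mul_eq_zero.mp hL0).resolve_left hp.ne'

-- entire dslope
lemma aux_dslope_diff (φ : ℂ → ℂ) (hφ : Differentiable ℂ φ) (c : ℂ) :
    Differentiable ℂ (dslope φ c) := by
  have h := (Complex.differentiableOn_dslope (c := c) (s := (univ : Set ℂ))
    univ_mem).mpr hφ.differentiableOn
  rw [← differentiableOn_univ]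
  exact h

-- bound on compact sets
lemma aux_compact_bound (ψ : ℂ → ℂ) (hψ : Continuous ψ) (R : ℝ) :
    ∃ M : ℝ, 0 ≤ M ∧ ∀ x : ℝ, |x| ≤ R → ‖ψ x‖ ≤ M := by
  obtain ⟨M, hM⟩ := (isCompact_closedBall (0:ℂ) R).exists_bound_of_continuousOn
    ((continuous_norm.comp hψ).continuousOn)
  refine ⟨max M 0, le_max_right _ _, fun x hx => ?_⟩
  have hmem : (x:ℂ) ∈ Metric.closedBall (0:ℂ) R := by
    simp [Metric.mem_closedBall, Complex.dist_eq, aux_norm_ofReal, hx]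
  have := hM _ hmem
  simp only [Function.comp_apply, Real.norm_eq_abs] at this
  exact le_trans (le_abs_self _) (le_trans this (le_max_left _ _))

theorem part_a (p : ℝ) (hp : 0 < p) (φ : ℂ → ℂ) (hφ : IsExtremal p φ)
    (t : ℝ) (ht : φ t = 0) :
    ∫ x : ℝ, ‖φ x‖ ^ p * (x / (x - t)) = 0 := by
  obtain ⟨⟨hφd, hφt, hφi⟩, hφ0, hmin⟩ := hφ
  have hφc : Continuous φ := hφd.continuous
  set ψ : ℂ → ℂ := dslope φ (t:ℂ) with hψ
  have hψd : Differentiable ℂ ψ := aux_dslope_diff φ hφd t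
  have hψc : Continuous ψ := hψd.continuous
  have hfact : ∀ z : ℂ, φ z = (z - t) * ψ z := by
    intro z
    have := sub_smul_dslope φ (t:ℂ) z
    rw [smul_eq_mul] at this
    rw [← hψ] at this
    rw [ht, sub_zero] at this
    exact this.symm
  set u : ℝ → ℝ := fun x => x / (x - t) with hu'
  set g : ℂ → ℂ := fun z => z * ψ z with hg'
  have hgd : Differentiable ℂ g := differentiable_id.mul hψd
  have hgc : Continuous g := hgd.continuous
  have hg0 : g 0 = 0 := by simp [hg']
  have hu : Measurable u := measurable_id.div ((measurable_id.sub_const t))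
  set R : ℝ := 2 * |t| + 2 with hR
  have hRpos : 0 < R := by positivity
  -- complex exterior bound
  have hext : ∀ z : ℂ, R ≤ ‖z‖ → ‖z‖ ≤ 2 * ‖z - (t:ℂ)‖ := by
    intro z hz
    have h1 : ‖z‖ - ‖(t:ℂ)‖ ≤ ‖z - t‖ := by
      simpa using norm_sub_norm_le z ((t:ℂ))
    have h2 : ‖(t:ℂ)‖ = |t| := aux_norm_ofReal t
    have h3 : |t| ≤ ‖z‖ / 2 - 1 := by
      rw [hR] at hz; linarith
    linarith
  have hgt : ExpTypePi g := by
    apply aux_type_of_bound φ g hφt hgc R 2 (by norm_num)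
    intro z hz
    have h1 : ‖g z‖ = ‖z‖ * ‖ψ z‖ := by
      rw [hg']; simp [norm_mul]
    have h2 : ‖φ z‖ = ‖z - t‖ * ‖ψ z‖ := by
      rw [hfact z, norm_mul]
    rw [h1, h2]
    have := hext z hz
    have hψnn : 0 ≤ ‖ψ z‖ := norm_nonneg _
    nlinarith
  -- a.e. identity
  have hae : ∀ᵐ x : ℝ, x ≠ t := by
    rw [ae_iff]
    have : {a : ℝ | ¬a ≠ t} = {t} := by ext a; simp
    rw [this]
    exact measure_singleton t
  have hgu : ∀ᵐ x : ℝ, g x = (u x : ℂ) * φ x := by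
    filter_upwards [hae] with x hx
    have hxt : ((x:ℂ) - (t:ℂ)) ≠ 0 := by
      rw [sub_ne_zero]
      exact_mod_cast fun h => hx (by exact_mod_cast h)
    rw [hg', hu']; simp only []
    rw [hfact x]
    have hxt' : (x - t : ℝ) ≠ 0 := sub_ne_zero.mpr hx
    push_cast
    field_simp
  -- real factorization
  have hfr : ∀ x : ℝ, ‖φ x‖ = |x - t| * ‖ψ x‖ := by
    intro x
    rw [hfact x, norm_mul]
    congr 1
    rw [show (x:ℂ) - (t:ℂ) = ((x - t : ℝ) : ℂ) by push_cast; ring, aux_norm_ofReal]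
  -- exterior real bounds
  have hxtR : ∀ x : ℝ, R ≤ |x| → |x| ≤ 2 * |x - t| ∧ 0 < |x - t| := by
    intro x hx
    have h1 : |x| - |t| ≤ |x - t| := abs_sub_abs_le_abs_sub x t
    have h3 : |t| ≤ |x| / 2 - 1 := by rw [hR] at hx; linarith
    constructor <;> linarith
  -- compact bound for ψ
  obtain ⟨M, hM0, hMb⟩ := aux_compact_bound ψ hψc R
  -- integrability 1
  have hmeas1 : AEStronglyMeasurable (fun x : ℝ => ‖φ x‖ ^ p * |u x|) volume := by
    apply Measurable.aestronglyMeasurable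
    apply Measurable.mul
    · exact ((continuous_norm.comp (hφc.comp Complex.continuous_ofReal)).measurable).pow_const p
    · exact hu.abs
  have hsplit : ∀ (h1 : IntegrableOn (fun x : ℝ => ‖φ x‖ ^ p * |u x|) (Icc (-R) R) volume)
      (h2 : IntegrableOn (fun x : ℝ => ‖φ x‖ ^ p * |u x|) (Icc (-R) R)ᶜ volume),
      Integrable (fun x : ℝ => ‖φ x‖ ^ p * |u x|) := by
    intro h1 h2
    rw [← integrableOn_univ, ← Set.union_compl_self (Icc (-R) R)]
    exact h1.union h2
  set C : ℝ := (R + 1) * ((M + 1) ^ p + 1) with hC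
  have hCpos : 0 < C := by positivity
  have hint1 : Integrable (fun x : ℝ => ‖φ x‖ ^ p * |u x|) := by
    apply hsplit
    · -- interior
      have hbd : ∀ x ∈ Icc (-R) R,
          ‖φ x‖ ^ p * |u x| ≤ C * |x - t| ^ (p - 1) := by
        intro x hx
        have hxR : |x| ≤ R := abs_le.mpr ⟨hx.1, hx.2⟩
        by_cases hxt : x = t
        · subst hxt
          have : u x = 0 := by rw [hu']; simp
          rw [this, abs_zero, mul_zero]
          positivity
        · have h0 : (0:ℝ) < |x - t| := abs_pos.mpr (sub_ne_zero.mpr hxt)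
          have hux : |u x| = |x| / |x - t| := by rw [hu']; simp [abs_div]
          have hφp : ‖φ x‖ ^ p = |x - t| ^ p * ‖ψ x‖ ^ p := by
            rw [hfr x, Real.mul_rpow (abs_nonneg _) (norm_nonneg _)]
          have hrw : |x - t| ^ p / |x - t| = |x - t| ^ (p - 1) := by
            rw [Real.rpow_sub h0, Real.rpow_one]
          have heq : ‖φ x‖ ^ p * |u x|
              = |x| * ‖ψ x‖ ^ p * |x - t| ^ (p - 1) := by
            rw [hφp, hux, ← hrw]; field_simp
          rw [heq]
          have h1 : ‖ψ x‖ ^ p ≤ (M + 1) ^ p :=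
            Real.rpow_le_rpow (norm_nonneg _) (by linarith [hMb x hxR]) hp.le
          have h2 : (0:ℝ) ≤ |x - t| ^ (p - 1) := Real.rpow_nonneg (abs_nonneg _) _
          have h3 : (0:ℝ) ≤ ‖ψ x‖ ^ p := Real.rpow_nonneg (norm_nonneg _) _
          have h4 : |x| * ‖ψ x‖ ^ p ≤ C := by
            rw [hC]
            nlinarith [abs_nonneg x]
          exact mul_le_mul_of_nonneg_right h4 h2
      refine Integrable.mono' ((aux_abs_rpow_integrable (p-1) (by linarith) t (-R) R).const_mul C)
        (hmeas1.restrict) ?_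
      rw [ae_restrict_iff' measurableSet_Icc]
      refine Eventually.of_forall fun x hx => ?_
      rw [Real.norm_eq_abs, abs_of_nonneg (by positivity)]
      exact hbd x hx
    · -- exterior
      have hbd : ∀ x ∈ (Icc (-R) R)ᶜ,
          ‖φ x‖ ^ p * |u x| ≤ 2 * ‖φ x‖ ^ p := by
        intro x hx
        have hxR : R ≤ |x| := by
          rw [mem_compl_iff, mem_Icc, not_and_or] at hx
          rcases hx with h | h
          · rw [abs_of_nonpos (by linarith)]; linarith
          · rw [abs_of_nonneg (by linarith)]; linarith
        obtain ⟨hb1, hb2⟩ := hxtR x hxR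
        have hux : |u x| ≤ 2 := by
          rw [hu']; simp only [abs_div]
          rw [div_le_iff₀ hb2]; linarith
        have h3 : (0:ℝ) ≤ ‖φ x‖ ^ p := Real.rpow_nonneg (norm_nonneg _) _
        nlinarith
      refine Integrable.mono' ((hφi.const_mul 2).integrableOn) (hmeas1.restrict) ?_
      rw [ae_restrict_iff' measurableSet_Icc.compl]
      refine Eventually.of_forall fun x hx => ?_
      rw [Real.norm_eq_abs, abs_of_nonneg (by positivity)]
      exact hbd x hx
  have hgabs : ∀ x : ℝ, ‖g x‖ = |x| * ‖ψ x‖ := by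
    intro x
    rw [hg']; simp only []
    rw [norm_mul, aux_norm_ofReal]
  have hint2 : Integrable (fun x : ℝ => ‖g x‖ ^ p) := by
    rw [← integrableOn_univ, ← Set.union_compl_self (Icc (-R) R)]
    have hgp : Continuous (fun x : ℝ => ‖g x‖ ^ p) := by
      apply Continuous.rpow_const
      · exact continuous_norm.comp (hgc.comp Complex.continuous_ofReal)
      · exact fun x => Or.inr hp.le
    refine IntegrableOn.union (hgp.integrableOn_Icc) ?_
    have hbd : ∀ x ∈ (Icc (-R) R)ᶜ,
        ‖g x‖ ^ p ≤ 2 ^ p * ‖φ x‖ ^ p := by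
      intro x hx
      have hxR : R ≤ |x| := by
        rw [mem_compl_iff, mem_Icc, not_and_or] at hx
        rcases hx with h | h
        · rw [abs_of_nonpos (by linarith)]; linarith
        · rw [abs_of_nonneg (by linarith)]; linarith
      obtain ⟨hb1, hb2⟩ := hxtR x hxR
      have h1 : ‖g x‖ ≤ 2 * ‖φ x‖ := by
        rw [hgabs x, hfr x]
        have hψnn : 0 ≤ ‖ψ x‖ := norm_nonneg _
        nlinarith
      calc ‖g x‖ ^ p ≤ (2 * ‖φ x‖) ^ p :=
            Real.rpow_le_rpow (norm_nonneg _) h1 hp.le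
        _ = 2 ^ p * ‖φ x‖ ^ p :=
            Real.mul_rpow (by norm_num) (norm_nonneg _)
    refine Integrable.mono' ((hφi.const_mul (2 ^ p)).integrableOn)
      (hgp.aestronglyMeasurable.restrict) ?_
    rw [ae_restrict_iff' measurableSet_Icc.compl]
    refine Eventually.of_forall fun x hx => ?_
    rw [Real.norm_eq_abs, abs_of_nonneg (by positivity)]
    exact hbd x hx
  exact master p hp φ ⟨⟨hφd, hφt, hφi⟩, hφ0, hmin⟩ u hu g hgd hgt hg0 hgu hint1 hint2

set_option maxHeartbeats 1000000 in
theorem part_b (p : ℝ) (hp : 0 < p) (φ : ℂ → ℂ) (hφ : IsExtremal p φ)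
    (t s : ℝ) (ht : φ t = 0) (hs : φ s = 0) (hts : t ≠ s) :
    ∫ x : ℝ, ‖φ x‖ ^ p * (x ^ 2 / ((x - t) * (x - s))) = 0 := by
  obtain ⟨⟨hφd, hφt, hφi⟩, hφ0, hmin⟩ := hφ
  have hφc : Continuous φ := hφd.continuous
  have hst : (s:ℂ) ≠ (t:ℂ) := by exact_mod_cast fun h => hts (by exact_mod_cast h.symm)
  set ψ1 : ℂ → ℂ := dslope φ (t:ℂ) with hψ1
  have hψ1d : Differentiable ℂ ψ1 := aux_dslope_diff φ hφd t
  have hfact1 : ∀ z : ℂ, φ z = (z - t) * ψ1 z := by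
    intro z
    have := sub_smul_dslope φ (t:ℂ) z
    rw [smul_eq_mul, ← hψ1, ht, sub_zero] at this
    exact this.symm
  have hψ1s : ψ1 s = 0 := by
    rw [hψ1, dslope_of_ne φ hst, slope_def_field, ht, hs]
    simp
  set ψ : ℂ → ℂ := dslope ψ1 (s:ℂ) with hψ
  have hψd : Differentiable ℂ ψ := aux_dslope_diff ψ1 hψ1d s
  have hψc : Continuous ψ := hψd.continuous
  have hfact2 : ∀ z : ℂ, ψ1 z = (z - s) * ψ z := by
    intro z
    have := sub_smul_dslope ψ1 (s:ℂ) z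
    rw [smul_eq_mul, ← hψ, hψ1s, sub_zero] at this
    exact this.symm
  have hfact : ∀ z : ℂ, φ z = (z - t) * (z - s) * ψ z := by
    intro z
    rw [hfact1 z, hfact2 z]; ring
  set u : ℝ → ℝ := fun x => x ^ 2 / ((x - t) * (x - s)) with hu'
  set g : ℂ → ℂ := fun z => z ^ 2 * ψ z with hg'
  have hgd : Differentiable ℂ g := (differentiable_id.pow 2).mul hψd
  have hgc : Continuous g := hgd.continuous
  have hg0 : g 0 = 0 := by simp [hg']
  have hu : Measurable u :=
    (measurable_id.pow_const 2).div ((measurable_id.sub_const t).mul (measurable_id.sub_const s))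
  set R : ℝ := 2 * (|t| + |s|) + 2 with hR
  have hRpos : 0 < R := by positivity
  -- complex exterior bounds
  have hext : ∀ (c : ℝ), |c| ≤ |t| + |s| → ∀ z : ℂ, R ≤ ‖z‖ →
      ‖z‖ ≤ 2 * ‖z - (c:ℂ)‖ := by
    intro c hc z hz
    have h1 : ‖z‖ - ‖(c:ℂ)‖ ≤ ‖z - c‖ := by
      simpa using norm_sub_norm_le z ((c:ℂ))
    have h2 : ‖(c:ℂ)‖ = |c| := aux_norm_ofReal c
    have h3 : |c| ≤ ‖z‖ / 2 - 1 := by rw [hR] at hz; linarith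
    linarith
  have hgt : ExpTypePi g := by
    apply aux_type_of_bound φ g hφt hgc R 4 (by norm_num)
    intro z hz
    have h1 : ‖g z‖ = ‖z‖ ^ 2 * ‖ψ z‖ := by
      rw [hg']; simp [norm_mul, norm_pow]
    have h2 : ‖φ z‖ = ‖z - t‖ * ‖z - s‖ * ‖ψ z‖ := by
      rw [hfact z, norm_mul, norm_mul]
    rw [h1, h2]
    have hbt := hext t (by linarith [abs_nonneg s]) z hz
    have hbs := hext s (by linarith [abs_nonneg t]) z hz
    have hψnn : 0 ≤ ‖ψ z‖ := norm_nonneg _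
    have hznn : 0 ≤ ‖z‖ := norm_nonneg _
    have htnn : 0 ≤ ‖z - (t:ℂ)‖ := norm_nonneg _
    have hsnn : 0 ≤ ‖z - (s:ℂ)‖ := norm_nonneg _
    have hmul : ‖z‖ * ‖z‖
        ≤ (2 * ‖z - (t:ℂ)‖) * (2 * ‖z - (s:ℂ)‖) :=
      mul_le_mul hbt hbs hznn (by positivity)
    have hsq : ‖z‖ ^ 2 = ‖z‖ * ‖z‖ := sq (‖z‖) ▸ rfl
    nlinarith
  -- a.e. identity
  have hae : ∀ᵐ x : ℝ, x ≠ t := by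
    rw [ae_iff]
    have : {a : ℝ | ¬a ≠ t} = {t} := by ext a; simp
    rw [this]; exact measure_singleton t
  have hae2 : ∀ᵐ x : ℝ, x ≠ s := by
    rw [ae_iff]
    have : {a : ℝ | ¬a ≠ s} = {s} := by ext a; simp
    rw [this]; exact measure_singleton s
  have hgu : ∀ᵐ x : ℝ, g x = (u x : ℂ) * φ x := by
    filter_upwards [hae, hae2] with x hxt hxs
    have hxt' : (x - t : ℝ) ≠ 0 := sub_ne_zero.mpr hxt
    have hxs' : (x - s : ℝ) ≠ 0 := sub_ne_zero.mpr hxs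
    rw [hg', hu']; simp only []
    rw [hfact x]
    have hxt2 : ((x:ℂ) - (t:ℂ)) ≠ 0 := by
      rw [show (x:ℂ) - (t:ℂ) = ((x - t : ℝ) : ℂ) by push_cast; ring]
      exact_mod_cast hxt'
    have hxs2 : ((x:ℂ) - (s:ℂ)) ≠ 0 := by
      rw [show (x:ℂ) - (s:ℂ) = ((x - s : ℝ) : ℂ) by push_cast; ring]
      exact_mod_cast hxs'
    push_cast
    field_simp
  -- real factorization
  have hfr : ∀ x : ℝ, ‖φ x‖ = |x - t| * |x - s| * ‖ψ x‖ := by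
    intro x
    rw [hfact x, norm_mul, norm_mul]
    rw [show (x:ℂ) - (t:ℂ) = ((x - t : ℝ) : ℂ) by push_cast; ring,
      show (x:ℂ) - (s:ℂ) = ((x - s : ℝ) : ℂ) by push_cast; ring,
      aux_norm_ofReal, aux_norm_ofReal]
  -- exterior real bounds
  have hxtR : ∀ x : ℝ, R ≤ |x| →
      (|x| ≤ 2 * |x - t| ∧ 0 < |x - t|) ∧ (|x| ≤ 2 * |x - s| ∧ 0 < |x - s|) := by
    intro x hx
    have h1 : |x| - |t| ≤ |x - t| := abs_sub_abs_le_abs_sub x t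
    have h2 : |x| - |s| ≤ |x - s| := abs_sub_abs_le_abs_sub x s
    have h3 : |t| + |s| ≤ |x| / 2 - 1 := by rw [hR] at hx; linarith
    have h4 : (0:ℝ) ≤ |t| := abs_nonneg t
    have h5 : (0:ℝ) ≤ |s| := abs_nonneg s
    exact ⟨⟨by linarith, by linarith⟩, ⟨by linarith, by linarith⟩⟩
  obtain ⟨M, hM0, hMb⟩ := aux_compact_bound ψ hψc R
  have hmeas1 : AEStronglyMeasurable (fun x : ℝ => ‖φ x‖ ^ p * |u x|) volume := by
    apply Measurable.aestronglyMeasurable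
    apply Measurable.mul
    · exact ((continuous_norm.comp (hφc.comp Complex.continuous_ofReal)).measurable).pow_const p
    · exact hu.abs
  set C : ℝ := (R + 1) ^ 2 * ((M + 1) ^ p + 1) with hC
  have hint1 : Integrable (fun x : ℝ => ‖φ x‖ ^ p * |u x|) := by
    rw [← integrableOn_univ, ← Set.union_compl_self (Icc (-R) R)]
    refine IntegrableOn.union ?_ ?_
    · -- interior
      have hbd : ∀ x ∈ Icc (-R) R, ‖φ x‖ ^ p * |u x|
          ≤ C * (|x - t| ^ (p - 1) * |x - s| ^ (p - 1)) := by
        intro x hx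
        have hxR : |x| ≤ R := abs_le.mpr ⟨hx.1, hx.2⟩
        by_cases hxts : x = t ∨ x = s
        · have hu0 : u x = 0 := by
            rw [hu']; simp only []
            rcases hxts with h | h <;> subst h <;> simp
          rw [hu0, abs_zero, mul_zero]
          have h1 : (0:ℝ) ≤ |x - t| ^ (p - 1) := Real.rpow_nonneg (abs_nonneg _) _
          have h2 : (0:ℝ) ≤ |x - s| ^ (p - 1) := Real.rpow_nonneg (abs_nonneg _) _
          positivity
        · push_neg at hxts
          obtain ⟨hxt, hxs⟩ := hxts
          have h0t : (0:ℝ) < |x - t| := abs_pos.mpr (sub_ne_zero.mpr hxt)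
          have h0s : (0:ℝ) < |x - s| := abs_pos.mpr (sub_ne_zero.mpr hxs)
          have hux : |u x| = x ^ 2 / (|x - t| * |x - s|) := by
            rw [hu']; simp only []
            rw [abs_div, abs_mul, abs_pow, sq_abs]
          have hφp : ‖φ x‖ ^ p = |x - t| ^ p * |x - s| ^ p * ‖ψ x‖ ^ p := by
            rw [hfr x, Real.mul_rpow (mul_nonneg (abs_nonneg _) (abs_nonneg _)) (norm_nonneg _),
              Real.mul_rpow (abs_nonneg _) (abs_nonneg _)]
          have hrw1 : |x - t| ^ p / |x - t| = |x - t| ^ (p - 1) := by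
            rw [Real.rpow_sub h0t, Real.rpow_one]
          have hrw2 : |x - s| ^ p / |x - s| = |x - s| ^ (p - 1) := by
            rw [Real.rpow_sub h0s, Real.rpow_one]
          have heq : ‖φ x‖ ^ p * |u x|
              = (x ^ 2 * ‖ψ x‖ ^ p) * (|x - t| ^ (p - 1) * |x - s| ^ (p - 1)) := by
            rw [hφp, hux, ← hrw1, ← hrw2]
            field_simp
          rw [heq]
          have h1 : ‖ψ x‖ ^ p ≤ (M + 1) ^ p :=
            Real.rpow_le_rpow (norm_nonneg _) (by linarith [hMb x hxR]) hp.le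
          have h3 : (0:ℝ) ≤ ‖ψ x‖ ^ p := Real.rpow_nonneg (norm_nonneg _) _
          have h4 : x ^ 2 * ‖ψ x‖ ^ p ≤ C := by
            rw [hC]
            have hx2 : x ^ 2 ≤ (R + 1) ^ 2 := by nlinarith [abs_nonneg x, le_abs_self x, neg_abs_le x]
            nlinarith [sq_nonneg x]
          have h5 : (0:ℝ) ≤ |x - t| ^ (p - 1) * |x - s| ^ (p - 1) :=
            mul_nonneg (Real.rpow_nonneg (abs_nonneg _) _) (Real.rpow_nonneg (abs_nonneg _) _)
          exact mul_le_mul_of_nonneg_right h4 h5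
      refine Integrable.mono' ((aux_two_sing (p-1) (by linarith) t s (-R) R hts).const_mul C)
        (hmeas1.restrict) ?_
      rw [ae_restrict_iff' measurableSet_Icc]
      refine Eventually.of_forall fun x hx => ?_
      rw [Real.norm_eq_abs, abs_of_nonneg (by positivity)]
      exact hbd x hx
    · -- exterior
      have hbd : ∀ x ∈ (Icc (-R) R)ᶜ,
          ‖φ x‖ ^ p * |u x| ≤ 4 * ‖φ x‖ ^ p := by
        intro x hx
        have hxR : R ≤ |x| := by
          rw [mem_compl_iff, mem_Icc, not_and_or] at hx
          rcases hx with h | h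
          · rw [abs_of_nonpos (by linarith)]; linarith
          · rw [abs_of_nonneg (by linarith)]; linarith
        obtain ⟨⟨hb1, hb2⟩, hb3, hb4⟩ := hxtR x hxR
        have hux : |u x| ≤ 4 := by
          rw [hu']; simp only []
          rw [abs_div, abs_mul, abs_pow, sq_abs]
          rw [div_le_iff₀ (by positivity)]
          have hxx : x ^ 2 = |x| * |x| := by rw [← sq_abs]; ring
          nlinarith [mul_le_mul hb1 hb3 (abs_nonneg x) (by positivity : (0:ℝ) ≤ 2 * |x - t|)]
        have h3 : (0:ℝ) ≤ ‖φ x‖ ^ p := Real.rpow_nonneg (norm_nonneg _) _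
        nlinarith
      refine Integrable.mono' ((hφi.const_mul 4).integrableOn) (hmeas1.restrict) ?_
      rw [ae_restrict_iff' measurableSet_Icc.compl]
      refine Eventually.of_forall fun x hx => ?_
      rw [Real.norm_eq_abs, abs_of_nonneg (by positivity)]
      exact hbd x hx
  have hgabs : ∀ x : ℝ, ‖g x‖ = x ^ 2 * ‖ψ x‖ := by
    intro x
    rw [hg']; simp only []
    rw [norm_mul, norm_pow, aux_norm_ofReal, sq_abs]
  have hint2 : Integrable (fun x : ℝ => ‖g x‖ ^ p) := by
    rw [← integrableOn_univ, ← Set.union_compl_self (Icc (-R) R)]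
    have hgp : Continuous (fun x : ℝ => ‖g x‖ ^ p) := by
      apply Continuous.rpow_const
      · exact continuous_norm.comp (hgc.comp Complex.continuous_ofReal)
      · exact fun x => Or.inr hp.le
    refine IntegrableOn.union (hgp.integrableOn_Icc) ?_
    have hbd : ∀ x ∈ (Icc (-R) R)ᶜ,
        ‖g x‖ ^ p ≤ 4 ^ p * ‖φ x‖ ^ p := by
      intro x hx
      have hxR : R ≤ |x| := by
        rw [mem_compl_iff, mem_Icc, not_and_or] at hx
        rcases hx with h | h
        · rw [abs_of_nonpos (by linarith)]; linarith
        · rw [abs_of_nonneg (by linarith)]; linarith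
      obtain ⟨⟨hb1, hb2⟩, hb3, hb4⟩ := hxtR x hxR
      have hψnn : (0:ℝ) ≤ ‖ψ x‖ := norm_nonneg _
      have h1 : ‖g x‖ ≤ 4 * ‖φ x‖ := by
        rw [hgabs x, hfr x]
        have hxx : x ^ 2 = |x| * |x| := by rw [← sq_abs]; ring
        have hψnn2 : (0:ℝ) ≤ ‖ψ x‖ := norm_nonneg _
        nlinarith [mul_le_mul hb1 hb3 (abs_nonneg x) (by positivity : (0:ℝ) ≤ 2 * |x - t|),
          mul_le_mul_of_nonneg_right (mul_le_mul hb1 hb3 (abs_nonneg x)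
            (by positivity : (0:ℝ) ≤ 2 * |x - t|)) hψnn2]
      calc ‖g x‖ ^ p ≤ (4 * ‖φ x‖) ^ p :=
            Real.rpow_le_rpow (norm_nonneg _) h1 hp.le
        _ = 4 ^ p * ‖φ x‖ ^ p :=
            Real.mul_rpow (by norm_num) (norm_nonneg _)
    refine Integrable.mono' ((hφi.const_mul (4 ^ p)).integrableOn)
      (hgp.aestronglyMeasurable.restrict) ?_
    rw [ae_restrict_iff' measurableSet_Icc.compl]
    refine Eventually.of_forall fun x hx => ?_
    rw [Real.norm_eq_abs, abs_of_nonneg (by positivity)]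
    exact hbd x hx
  exact master p hp φ ⟨⟨hφd, hφt, hφi⟩, hφ0, hmin⟩ u hu g hgd hgt hg0 hgu hint1 hint2

/-- Orthogonality relations associated with the zeros of an extremal function. -/
theorem extremal_orthogonality (p : ℝ) (hp : 0 < p) (φ : ℂ → ℂ)
    (hφ : IsExtremal p φ) :
    (∀ t : ℝ, φ t = 0 →
      ∫ x : ℝ, ‖φ x‖ ^ p * (x / (x - t)) = 0) ∧
    (∀ t s : ℝ, φ t = 0 → φ s = 0 → t ≠ s →
      ∫ x : ℝ, ‖φ x‖ ^ p * (x ^ 2 / ((x - t) * (x - s))) = 0) := by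
  exact ⟨fun t ht => part_a p hp φ hφ t ht,
    fun t s ht hs hts => part_b p hp φ hφ t s ht hs hts⟩
end
end
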